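/- For every integer $n \ge 2$ and all real $z$, $\frac{d}{dz}\big[(1-z^2)\,\tilde P_n(z)\big] = (1-z^2)\,P_n'(z)$. (Equivalently, any antiderivative $F$ of $\tilde P_n$ satisfies the Legendre-operator equation $\partial_z\big((1-z^2)\partial_z F\big) = -(z^2-1)P_n'(z)$, which is the defining property of $\tilde P_n$ used in the paper.) -/
import Mathlib

open Polynomial

noncomputable def rod (n : ℕ) : ℝ[X] := ((X : ℝ[X]) ^ 2 - 1) ^ n

lemma iter_d (j : ℕ) (q : ℝ[X]) :
    derivative (derivative^[j] q) = derivative^[j+1] q :=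
  (Function.iterate_succ_apply' _ _ _).symm

lemma iter_d' (j : ℕ) (q : ℝ[X]) :
    derivative^[j] (derivative q) = derivative^[j+1] q :=
  (Function.iterate_succ_apply _ _ _).symm

lemma leib1 (k : ℕ) (q : ℝ[X]) :
    derivative^[k+1] ((X : ℝ[X]) * q) =
      X * derivative^[k+1] q + C ((k : ℝ) + 1) * derivative^[k] q := by
  induction k with
  | zero =>
    simp only [Function.iterate_one, derivative_mul, derivative_X, one_mul,
      Nat.cast_zero, zero_add, map_one, Function.iterate_zero, id]
    ring
  | succ k ih =>
    rw [Function.iterate_succ_apply', ih]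
    simp only [derivative_add, derivative_mul, derivative_X, derivative_C, one_mul, zero_mul,
      iter_d, map_add, map_mul, map_one, map_natCast, derivative_natCast, derivative_one]
    push_cast
    ring

lemma mainLeib (k : ℕ) (r : ℝ[X]) :
    derivative^[k+1] (((X : ℝ[X]) ^ 2 - 1) * derivative r) =
      ((X : ℝ[X]) ^ 2 - 1) * derivative^[k+2] r
        + C (2 * ((k : ℝ) + 1)) * X * derivative^[k+1] r
        + C (((k : ℝ) + 1) * k) * derivative^[k] r := by
  induction k with
  | zero =>
    simp only [Function.iterate_one, derivative_mul, derivative_sub, derivative_one,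
      derivative_X_pow, iter_d, Function.iterate_zero, id, zero_add]
    rw [show derivative r = derivative^[1] r from rfl, iter_d]
    norm_num
    try ring
  | succ k ih =>
    rw [Function.iterate_succ_apply', ih]
    simp only [derivative_add, derivative_mul, derivative_sub, derivative_one,
      derivative_X_pow, derivative_X, derivative_C, iter_d, map_add, map_mul, map_one,
      map_natCast, map_ofNat, derivative_natCast, derivative_ofNat]
    push_cast
    ring

lemma base2 (j : ℕ) :
    derivative (rod (j+1)) = C (2*((j:ℝ)+1)) * (X * rod j) := by
  simp only [rod, derivative_pow, derivative_sub, derivative_X_pow, derivative_one, derivative_X]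
  simp only [map_mul, map_add, map_one, map_natCast, map_ofNat, Nat.add_sub_cancel]
  push_cast
  ring

lemma base1 (j : ℕ) :
    ((X : ℝ[X])^2 - 1) * derivative (rod (j+1)) = C (2*((j:ℝ)+1)) * (X * rod (j+1)) := by
  rw [base2]
  simp only [rod, pow_succ]
  ring

-- (x²-1) D^{j+2} rod(j+1) = (j+1)(j+2) D^j rod(j+1)
lemma fact3 (j : ℕ) :
    ((X : ℝ[X])^2 - 1) * derivative^[j+2] (rod (j+1)) =
      C (((j:ℝ)+1)*((j:ℝ)+2)) * derivative^[j] (rod (j+1)) := by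
  have h := congrArg (derivative^[j+1]) (base1 j)
  rw [mainLeib j (rod (j+1)), iterate_derivative_C_mul, leib1 j (rod (j+1))] at h
  simp only [map_add, map_mul, map_one, map_natCast, map_ofNat] at h ⊢
  linear_combination h

-- Legendre ODE (unnormalized)
lemma factODE (j : ℕ) :
    ((X : ℝ[X])^2 - 1) * derivative^[j+3] (rod (j+1))
      + 2 * X * derivative^[j+2] (rod (j+1)) =
      C (((j:ℝ)+1)*((j:ℝ)+2)) * derivative^[j+1] (rod (j+1)) := by
  have h := congrArg derivative (fact3 j)
  simp only [derivative_mul, derivative_sub, derivative_one, derivative_X_pow, derivative_C,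
    iter_d, map_add, map_mul, map_one, map_natCast, map_ofNat, derivative_natCast, derivative_ofNat] at h ⊢
  push_cast at h ⊢
  linear_combination h

lemma fact6 (k : ℕ) :
    derivative^[k+2] (rod (k+2)) =
      C (2*((k:ℝ)+2)) * (X * derivative^[k+1] (rod (k+1))
        + C ((k:ℝ)+1) * derivative^[k] (rod (k+1))) := by
  have h := congrArg (derivative^[k+1]) (base2 (k+1))
  rw [iter_d', iterate_derivative_C_mul, leib1 k (rod (k+1))] at h
  push_cast at h
  convert h using 2 <;> push_cast <;> ring

lemma fact6b (k : ℕ) :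
    derivative^[k+3] (rod (k+2)) =
      C (2*((k:ℝ)+2)) * (X * derivative^[k+2] (rod (k+1))
        + C ((k:ℝ)+2) * derivative^[k+1] (rod (k+1))) := by
  have h := congrArg (derivative^[k+2]) (base2 (k+1))
  rw [iter_d', iterate_derivative_C_mul, leib1 (k+1) (rod (k+1))] at h
  push_cast at h
  convert h using 2 <;> push_cast <;> ring

lemma eval_one_iter (j : ℕ) : ∀ q : ℝ[X],
    eval 1 (derivative^[j] (((X:ℝ[X]) - 1)^(j+1) * q)) = 0 := by
  induction j with
  | zero => intro q; simp
  | succ j ih =>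
    intro q
    rw [Function.iterate_succ_apply]
    have hd : derivative (((X:ℝ[X]) - 1)^(j+2) * q) =
        ((X:ℝ[X]) - 1)^(j+1) * (C ((j:ℝ)+2) * q + ((X:ℝ[X]) - 1) * derivative q) := by
      simp only [derivative_mul, derivative_pow, derivative_sub, derivative_X, derivative_one,
        map_add, map_mul, map_one, map_natCast, map_ofNat, Nat.add_sub_cancel]
      push_cast
      ring
    rw [hd]
    exact ih _

lemma eval_one_rod (j : ℕ) : eval 1 (derivative^[j] (rod (j+1))) = 0 := by
  have : rod (j+1) = ((X:ℝ[X]) - 1)^(j+1) * ((X:ℝ[X]) + 1)^(j+1) := by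
    rw [rod, ← mul_pow]
    congr 1
    ring
  rw [this]
  exact eval_one_iter j _

lemma eval_one_rel (k : ℕ) :
    eval 1 (derivative^[k+2] (rod (k+2))) =
      2*((k:ℝ)+2) * eval 1 (derivative^[k+1] (rod (k+1))) := by
  have h := congrArg (eval 1) (fact6 k)
  simpa [eval_one_rod k] using h

-- key identity A'
lemma factA (k : ℕ) :
    C ((k:ℝ)+3) * derivative^[k+1] (rod (k+2)) =
      X * derivative^[k+2] (rod (k+2)) - C (2*((k:ℝ)+2)) * derivative^[k+1] (rod (k+1)) := by
  set Δ : ℝ[X] := C ((k:ℝ)+3) * derivative^[k+1] (rod (k+2))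
      - (X * derivative^[k+2] (rod (k+2)) - C (2*((k:ℝ)+2)) * derivative^[k+1] (rod (k+1)))
    with hΔ
  have hd : derivative Δ = 0 := by
    have h6 := fact6 k
    have h6b := fact6b k
    have h3 := fact3 k
    rw [hΔ]
    simp only [derivative_sub, derivative_mul, derivative_C, derivative_X, iter_d, zero_mul,
      one_mul]
    simp only [map_add, map_mul, map_one, map_natCast, map_ofNat] at h6 h6b h3 ⊢
    linear_combination (((k:ℝ[X]))+2) * h6 - X * h6b - (2*((k:ℝ[X])+2)) * h3
  have hc : Δ = C (Δ.coeff 0) := eq_C_of_derivative_eq_zero hd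
  have he : eval 1 Δ = 0 := by
    rw [hΔ]
    simp only [eval_sub, eval_mul, eval_C, eval_X, eval_one_rod (k+1), eval_one_rel k,
      one_mul, mul_zero]
    ring
  have h0 : Δ = 0 := by
    rw [hc] at he ⊢
    simp only [eval_C] at he
    rw [he, map_zero]
  exact sub_eq_zero.mp h0

lemma iteratedDeriv_eval (q : ℝ[X]) (n : ℕ) :
    iteratedDeriv n (fun x : ℝ => q.eval x) = fun x => (derivative^[n] q).eval x := by
  induction n with
  | zero => simp [iteratedDeriv_zero]
  | succ n ih =>
    rw [iteratedDeriv_succ, ih]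
    funext x
    rw [Function.iterate_succ_apply']
    exact Polynomial.deriv _


/-- Legendre polynomials via Rodrigues' formula. -/
noncomputable def legendreP (n : ℕ) (z : ℝ) : ℝ :=
  (1 / (2 ^ n * (Nat.factorial n) : ℝ)) * iteratedDeriv n (fun x : ℝ => (x ^ 2 - 1) ^ n) z

/-- `P̃_n(z) = (1/(n+2)) (n P_n(z) - (2/(n-1)) P_{n-1}'(z))` for `n ≥ 2`. -/
noncomputable def tildeP (n : ℕ) (z : ℝ) : ℝ :=
  (1 / ((n : ℝ) + 2)) *
    ((n : ℝ) * legendreP n z - (2 / ((n : ℝ) - 1)) * deriv (legendreP (n - 1)) z)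

lemma hleg (m : ℕ) : legendreP m =
    fun z => (1 / (2 ^ m * Nat.factorial m : ℝ)) * eval z (derivative^[m] (rod m)) := by
  funext z
  rw [legendreP]
  congr 1
  have h : (fun x : ℝ => (x ^ 2 - 1) ^ m) = fun x => eval x (rod m) := by
    funext x; simp [rod]
  rw [h, iteratedDeriv_eval]

lemma hdleg (m : ℕ) (z : ℝ) : deriv (legendreP m) z =
    (1 / (2 ^ m * Nat.factorial m : ℝ)) * eval z (derivative^[m+1] (rod m)) := by
  rw [hleg m, deriv_const_mul_field, Polynomial.deriv, iter_d]

/-- For `n ≥ 2` and all real `z`, `d/dz [(1-z²) P̃_n(z)] = (1-z²) P_n'(z)`,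
i.e. `P̃_n` solves the Legendre-operator equation used to define it. -/
theorem deriv_one_sub_sq_mul_tildeP (n : ℕ) (hn : 2 ≤ n) (z : ℝ) :
    deriv (fun t : ℝ => (1 - t ^ 2) * tildeP n t) z =
      (1 - z ^ 2) * deriv (legendreP n) z := by
  obtain ⟨k, rfl⟩ : ∃ k, n = k + 2 := ⟨n - 2, by omega⟩
  have hk1 : ((k:ℝ) + 1) ≠ 0 := by positivity
  have hk4 : ((k:ℝ) + 4) ≠ 0 := by positivity
  have hk1' : (1 + (k:ℝ)) ≠ 0 := by positivity
  have hk4' : (4 + (k:ℝ)) ≠ 0 := by positivity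
  obtain ⟨c, hc⟩ : ∃ c : ℝ, c = 1 / (2 ^ (k+2) * Nat.factorial (k+2) : ℝ) := ⟨_, rfl⟩
  obtain ⟨cm, hcm⟩ : ∃ cm : ℝ, cm = 1 / (2 ^ (k+1) * Nat.factorial (k+1) : ℝ) := ⟨_, rfl⟩
  have hcc : cm = 2 * ((k:ℝ) + 2) * c := by
    obtain ⟨D, hD⟩ : ∃ D : ℝ, D = 2 ^ (k+1) * Nat.factorial (k+1) := ⟨_, rfl⟩
    have hDn : D ≠ 0 := by rw [hD]; positivity
    have h2 : 2 * ((k:ℝ) + 2) ≠ 0 := by positivity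
    have e : ((2:ℝ) ^ (k + 2) * Nat.factorial (k+2)) =
        (2 * ((k:ℝ)+2)) * (2 ^ (k+1) * Nat.factorial (k+1)) := by
      rw [show k + 2 = (k+1) + 1 from rfl, pow_succ, Nat.factorial_succ]
      push_cast
      ring
    rw [hc, hcm, e, ← hD]
    field_simp
  have hl2 : legendreP (k+2) = fun z => c * eval z (derivative^[k+2] (rod (k+2))) := by
    rw [hleg (k+2)]; simp only [← hc]
  have hd2 : ∀ t, deriv (legendreP (k+2)) t = c * eval t (derivative^[k+3] (rod (k+2))) := by
    intro t; rw [hdleg (k+2) t, ← hc]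
  have hd1 : ∀ t, deriv (legendreP (k+1)) t = cm * eval t (derivative^[k+2] (rod (k+1))) := by
    intro t; rw [hdleg (k+1) t, ← hcm]
  set W : ℝ[X] := (1 - (X:ℝ[X])^2) *
      (C (1/(((k:ℝ)+2)+2)) *
        (C (((k:ℝ)+2) * c) * derivative^[k+2] (rod (k+2))
          - C ((2/(((k:ℝ)+2)-1)) * cm) * derivative^[k+2] (rod (k+1)))) with hW
  have hfun : (fun t : ℝ => (1 - t ^ 2) * tildeP (k+2) t) = fun t => eval t W := by
    funext t
    rw [tildeP, show (k + 2 - 1) = k + 1 from rfl, hd1 t, hl2, hW]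
    simp only [eval_mul, eval_sub, eval_add, eval_one, eval_pow, eval_X, eval_C]
    push_cast
    ring
  rw [hfun, Polynomial.deriv, hd2 z, hW]
  simp only [derivative_mul, derivative_sub, derivative_one, derivative_X_pow, derivative_C,
    iter_d, zero_mul, one_mul, mul_zero, zero_sub, add_zero, zero_add]
  simp only [eval_mul, eval_sub, eval_add, eval_one, eval_pow, eval_X, eval_C, eval_neg]
  have hA := congrArg (eval z) (factA k)
  have h3 := congrArg (eval z) (fact3 (k+1))
  have hO := congrArg (eval z) (factODE k)
  simp only [eval_mul, eval_sub, eval_add, eval_one, eval_pow, eval_X, eval_C,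
    eval_ofNat] at hA h3 hO
  push_cast at hA h3 hO ⊢
  set s1 : ℝ := eval z (derivative^[k+1] (rod (k+2))) with hs1
  set s2 : ℝ := eval z (derivative^[k+2] (rod (k+2))) with hs2
  set s3 : ℝ := eval z (derivative^[k+3] (rod (k+2))) with hs3
  set t1 : ℝ := eval z (derivative^[k+1] (rod (k+1))) with ht1
  set t2 : ℝ := eval z (derivative^[k+2] (rod (k+1))) with ht2
  set t3 : ℝ := eval z (derivative^[k+3] (rod (k+1))) with ht3
  rw [hcc]
  obtain ⟨w, hw⟩ : ∃ w : ℝ, w = ((k:ℝ)+4)⁻¹ := ⟨_, rfl⟩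
  obtain ⟨v, hv⟩ : ∃ v : ℝ, v = ((k:ℝ)+1)⁻¹ := ⟨_, rfl⟩
  have hw1 : ((k:ℝ)+4)*w = 1 := by rw [hw]; exact mul_inv_cancel₀ hk4
  have hv1 : ((k:ℝ)+1)*v = 1 := by rw [hv]; exact mul_inv_cancel₀ hk1
  have ew : (1:ℝ)/((k:ℝ)+2+2) = w := by
    rw [hw, one_div]
    congr 1
    ring
  have ev : (2:ℝ)/((k:ℝ)+2-1) = 2*v := by
    rw [hv, div_eq_mul_inv]
    congr 2
    ring
  rw [ew, ev]
  linear_combination (2*c*w) * h3 + (2*c*((k:ℝ)+2)*w) * hA + (4*c*((k:ℝ)+2)*w*v) * hO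
    + (4*c*((k:ℝ)+2)^2*w*t1) * hv1 + ((1-z^2)*c*s3) * hw1
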